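/- arXiv:2512.03714 — 2 statements merged into one kernel-verified Lean document; each statement's English description precedes it below -/
import Mathlib

section
/- Let g, h be natural numbers with g ≥ 3 and 1 ≤ h ≤ g − 2, and set A = (2h+1)(2h+2) and c = g. Define real sequences K_m = A^m (4g − 4) − (2h² + h)·∑_{i=0}^{m−1} A^i and χ_m = (1/2)(A^m c − (h² + h)·∑_{i=0}^{m−1} A^i). Then the sequence of slopes λ_m = K_m/χ_m is strictly increasing in m. -/
open Finset in
/-- In the even-genus case (`c = g`) the slopes `λ_m = K_m/χ_m` of the iterated
construction form a strictly increasing sequence. -/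
theorem iterated_slope_strictMono (g h : ℕ) (hg : 3 ≤ g) (hh1 : 1 ≤ h) (hh2 : h ≤ g - 2)
    (A : ℝ) (hA : A = (2 * (h : ℝ) + 1) * (2 * (h : ℝ) + 2))
    (K χ : ℕ → ℝ)
    (hK : ∀ m, K m = A ^ m * (4 * (g : ℝ) - 4)
          - (2 * (h : ℝ) ^ 2 + (h : ℝ)) * ∑ i ∈ range m, A ^ i)
    (hχ : ∀ m, χ m = (1 / 2) * (A ^ m * (g : ℝ)
          - ((h : ℝ) ^ 2 + (h : ℝ)) * ∑ i ∈ range m, A ^ i)) :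
    StrictMono (fun m => K m / χ m) := by
  have hhr : (1:ℝ) ≤ (h:ℝ) := by exact_mod_cast hh1
  have hg2 : h + 2 ≤ g := by omega
  have hh2' : (h:ℝ) + 2 ≤ (g:ℝ) := by exact_mod_cast hg2
  have hgr : (3:ℝ) ≤ (g:ℝ) := by exact_mod_cast hg
  have hA1 : (1:ℝ) < A := by rw [hA]; nlinarith
  have hχpos : ∀ m, 0 < χ m := by
    intro m
    rw [hχ]
    have hS : (∑ i ∈ range m, A ^ i) * (A - 1) = A ^ m - 1 := geom_sum_mul A m
    have hSnn : (0:ℝ) ≤ ∑ i ∈ range m, A ^ i := by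
      apply Finset.sum_nonneg; intro i _; positivity
    have h1 : (h:ℝ)^2 + h ≤ A - 1 := by rw [hA]; nlinarith
    have hSb : ((h:ℝ)^2 + h) * ∑ i ∈ range m, A ^ i ≤ A ^ m - 1 := by
      calc ((h:ℝ)^2+h) * ∑ i ∈ range m, A ^ i
          ≤ (A-1) * ∑ i ∈ range m, A ^ i := by nlinarith
        _ = A ^ m - 1 := by rw [mul_comm]; exact hS
    have hAm : (1:ℝ) ≤ A ^ m := one_le_pow₀ (le_of_lt hA1)
    nlinarith
  apply strictMono_nat_of_lt_succ
  intro m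
  show K m / χ m < K (m+1) / χ (m+1)
  rw [div_lt_div_iff₀ (hχpos m) (hχpos (m+1))]
  have hAmpos : (0:ℝ) < A ^ m := pow_pos (by linarith) m
  have hD : 0 < (4*(g:ℝ)-4)*((h:ℝ)^2+h) - (2*(h:ℝ)^2+h)*(g:ℝ) := by
    nlinarith [mul_nonneg (by linarith : (0:ℝ) ≤ (g:ℝ) - (h:ℝ) - 2) (by linarith : (0:ℝ) ≤ (h:ℝ)),
      mul_nonneg (mul_nonneg (by linarith : (0:ℝ) ≤ (g:ℝ) - (h:ℝ) - 2) (by linarith : (0:ℝ) ≤ (h:ℝ))) (by linarith : (0:ℝ) ≤ (h:ℝ))]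
  have hS' : A * (∑ i ∈ range m, A ^ i) - (∑ i ∈ range m, A ^ i) = A ^ m - 1 := by
    linear_combination geom_sum_mul A m
  have key : K (m+1) * χ m - K m * χ (m+1)
      = (1/2) * A ^ m * ((4*(g:ℝ)-4)*((h:ℝ)^2+h) - (2*(h:ℝ)^2+h)*(g:ℝ)) := by
    rw [hK, hK, hχ, hχ, sum_range_succ, pow_succ]
    linear_combination (-(1/2) * A ^ m * ((4*(g:ℝ)-4)*((h:ℝ)^2+h) - (2*(h:ℝ)^2+h)*(g:ℝ))) * hS'
  nlinarith [mul_pos hAmpos hD]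
end

section
/- Let g ≥ 2 be a real number and define F: ℝ → ℝ by F(x) = 2((16g − 18)x² + (24g − 25)x + 4(g − 1)) / ((4g − 1)x² + (6g − 1)x + g). Set x₀ = (2(g − 2) + √(4g² + 5g − 12))/7. Then x₀ > 0 and F(x) ≤ F(x₀) for every x ≥ 0; that is, F attains its maximum on [0, ∞) at x₀. -/
/-- For `g ≥ 2`, the limiting-slope function (even-genus case) attains its
maximum on `[0, ∞)` at `x₀ = (2(g − 2) + √(4g² + 5g − 12))/7`. -/
theorem limit_slope_max_even (g : ℝ) (hg : 2 ≤ g)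
    (F : ℝ → ℝ)
    (hF : ∀ x, F x = 2 * ((16 * g - 18) * x ^ 2 + (24 * g - 25) * x + 4 * (g - 1)) /
      ((4 * g - 1) * x ^ 2 + (6 * g - 1) * x + g))
    (x₀ : ℝ) (hx₀ : x₀ = (2 * (g - 2) + Real.sqrt (4 * g ^ 2 + 5 * g - 12)) / 7) :
    0 < x₀ ∧ ∀ x, 0 ≤ x → F x ≤ F x₀ := by
  subst hx₀
  set s := Real.sqrt (4 * g ^ 2 + 5 * g - 12) with hsdef
  have hc : (0:ℝ) ≤ 4 * g ^ 2 + 5 * g - 12 := by nlinarith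
  have hs : s ^ 2 = 4 * g ^ 2 + 5 * g - 12 := Real.sq_sqrt hc
  have hs0 : 0 ≤ s := Real.sqrt_nonneg _
  have hspos : 0 < s := by nlinarith
  set x₀ : ℝ := (2 * (g - 2) + s) / 7 with hx0def
  have hx0pos : 0 < x₀ := by rw [hx0def]; nlinarith
  have hQ : ∀ x : ℝ, 0 ≤ x → 0 < (4 * g - 1) * x ^ 2 + (6 * g - 1) * x + g := by
    intro x hx
    have h1 : 0 ≤ (4 * g - 1) * x ^ 2 :=
      mul_nonneg (by linarith) (sq_nonneg x)
    have h2 : 0 ≤ (6 * g - 1) * x := mul_nonneg (by linarith) hx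
    linarith
  refine ⟨hx0pos, fun x hx => ?_⟩
  rw [hF, hF]
  rw [div_le_div_iff₀ (hQ x hx) (hQ x₀ hx0pos.le)]
  have key : 2 * ((16 * g - 18) * x₀ ^ 2 + (24 * g - 25) * x₀ + 4 * (g - 1)) *
        ((4 * g - 1) * x ^ 2 + (6 * g - 1) * x + g) -
      2 * ((16 * g - 18) * x ^ 2 + (24 * g - 25) * x + 4 * (g - 1)) *
        ((4 * g - 1) * x₀ ^ 2 + (6 * g - 1) * x₀ + g) =
      2 * s * (x - x₀) ^ 2 := by
    rw [hx0def]
    linear_combination ((2:ℝ)/49) * (4 + 7 * x - s - 2 * g) * hs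
  nlinarith [mul_nonneg hs0 (sq_nonneg (x - x₀)), key]
end
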